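/- Let (X₁, X₂) be a random vector with values in {0,1}², with marginals p₁ = P(X₁ = 1), p₂ = P(X₂ = 1), and covariance c = P(X₁ = 1, X₂ = 1) - p₁p₂. Let (Y₁, Y₂) be an independent copy of (X₁, X₂). Then the covariance of the disagreement indicators Z₁ = 1{X₁ ≠ Y₁} and Z₂ = 1{X₂ ≠ Y₂} satisfies P(X₁ ≠ Y₁, X₂ ≠ Y₂) - P(X₁ ≠ Y₁)·P(X₂ ≠ Y₂) = 2c(1 - 2p₁)(1 - 2p₂) + 4c². -/
import Mathlib


open MeasureTheory ProbabilityTheory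

/-- Let `(X₁,X₂)` be a random vector in `{0,1}²` with marginals `p₁, p₂` and covariance
`c`, and let `(Y₁,Y₂)` be an independent copy. Then the covariance of the disagreement
indicators satisfies
`P(X₁≠Y₁, X₂≠Y₂) - P(X₁≠Y₁)·P(X₂≠Y₂) = 2c(1-2p₁)(1-2p₂) + 4c²`. -/
theorem disagreement_covariance {Ω : Type*} [MeasurableSpace Ω] (μ : Measure Ω)
    [IsProbabilityMeasure μ] (X Y : Ω → Bool × Bool)
    (hXm : Measurable X) (hYm : Measurable Y)
    (hid : Measure.map X μ = Measure.map Y μ)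
    (hindep : IndepFun X Y μ)
    (p₁ p₂ c : ℝ)
    (hp₁ : p₁ = (μ {ω | (X ω).1 = true}).toReal)
    (hp₂ : p₂ = (μ {ω | (X ω).2 = true}).toReal)
    (hc : c = (μ {ω | (X ω).1 = true ∧ (X ω).2 = true}).toReal - p₁ * p₂) :
    (μ {ω | (X ω).1 ≠ (Y ω).1 ∧ (X ω).2 ≠ (Y ω).2}).toReal -
      (μ {ω | (X ω).1 ≠ (Y ω).1}).toReal * (μ {ω | (X ω).2 ≠ (Y ω).2}).toReal =
    2 * c * (1 - 2 * p₁) * (1 - 2 * p₂) + 4 * c ^ 2 := by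
  classical
  set q : Bool × Bool → ℝ := fun s => (μ (X ⁻¹' {s})).toReal with hqdef
  have hYq : ∀ t, (μ (Y ⁻¹' {t})).toReal = q t := by
    intro t
    have h : μ (Y ⁻¹' {t}) = μ (X ⁻¹' {t}) := by
      rw [← Measure.map_apply hYm (measurableSet_singleton t),
          ← Measure.map_apply hXm (measurableSet_singleton t), hid]
    simp [hqdef, h]
  have hE : ∀ s t : Bool × Bool, (μ {ω | X ω = s ∧ Y ω = t}).toReal = q s * q t := by
    intro s t
    have h1 : {ω | X ω = s ∧ Y ω = t} = X ⁻¹' {s} ∩ Y ⁻¹' {t} := by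
      ext ω; simp [Set.mem_preimage]
    rw [h1, hindep.measure_inter_preimage_eq_mul _ _ (measurableSet_singleton s)
        (measurableSet_singleton t), ENNReal.toReal_mul, hYq]
  -- key lemma for joint events
  have key : ∀ (P : Bool × Bool → Bool × Bool → Prop),
      (μ {ω | P (X ω) (Y ω)}).toReal
        = ∑ p ∈ Finset.univ.filter (fun p : (Bool × Bool) × (Bool × Bool) => P p.1 p.2),
            q p.1 * q p.2 := by
    intro P
    have hset : {ω | P (X ω) (Y ω)} =
        ⋃ p ∈ Finset.univ.filter (fun p : (Bool × Bool) × (Bool × Bool) => P p.1 p.2),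
          {ω | X ω = p.1 ∧ Y ω = p.2} := by
      ext ω
      simp only [Set.mem_iUnion, Finset.mem_coe, Finset.mem_filter, Finset.mem_univ, true_and,
        Set.mem_setOf_eq, exists_prop]
      constructor
      · intro h; exact ⟨(X ω, Y ω), h, rfl, rfl⟩
      · rintro ⟨p, hp, h1, h2⟩; rw [h1, h2]; exact hp
    have hmeas : ∀ p : (Bool × Bool) × (Bool × Bool),
        MeasurableSet {ω | X ω = p.1 ∧ Y ω = p.2} := by
      intro p
      have : {ω | X ω = p.1 ∧ Y ω = p.2} = X ⁻¹' {p.1} ∩ Y ⁻¹' {p.2} := by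
        ext ω; simp [Set.mem_preimage]
      rw [this]
      exact (hXm (measurableSet_singleton _)).inter (hYm (measurableSet_singleton _))
    rw [hset, measure_biUnion_finset ?_ (fun p _ => hmeas p)]
    · rw [ENNReal.toReal_sum (fun p _ => measure_ne_top μ _)]
      exact Finset.sum_congr rfl fun p _ => hE p.1 p.2
    · intro a _ b _ hab
      simp only [Function.onFun, Set.disjoint_left]
      intro ω h1 h2
      exact hab (by
        apply Prod.ext
        · rw [← h1.1, ← h2.1]
        · rw [← h1.2, ← h2.2])
  -- key lemma for events about X only
  have keyX : ∀ (Q : Bool × Bool → Prop),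
      (μ {ω | Q (X ω)}).toReal = ∑ s ∈ Finset.univ.filter Q, q s := by
    intro Q
    have hset : {ω | Q (X ω)} = ⋃ s ∈ Finset.univ.filter Q, X ⁻¹' {s} := by
      ext ω
      simp only [Set.mem_iUnion, Finset.mem_coe, Finset.mem_filter, Finset.mem_univ, true_and,
        Set.mem_setOf_eq, Set.mem_preimage, Set.mem_singleton_iff, exists_prop]
      constructor
      · intro h; exact ⟨X ω, h, rfl⟩
      · rintro ⟨s, hs, h1⟩; rw [h1]; exact hs
    rw [hset, measure_biUnion_finset ?_ (fun s _ => hXm (measurableSet_singleton s))]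
    · rw [ENNReal.toReal_sum (fun s _ => measure_ne_top μ _)]
    · intro a _ b _ hab
      simp only [Function.onFun, Set.disjoint_left]
      intro ω h1 h2
      exact hab (by
        simp only [Set.mem_preimage, Set.mem_singleton_iff] at h1 h2
        rw [← h1, ← h2])
  have hsum : q (false, false) + q (false, true) + q (true, false) + q (true, true) = 1 := by
    have := keyX (fun _ => True)
    simp only [Set.setOf_true, measure_univ, ENNReal.toReal_one, Finset.filter_true] at this
    rw [this]
    rw [show (Finset.univ : Finset (Bool × Bool)) =
      {(false, false), (false, true), (true, false), (true, true)} by decide]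
    simp [Finset.sum_insert, Finset.mem_insert]
    ring
  have h1 := keyX (fun s => s.1 = true)
  have h2 := keyX (fun s => s.2 = true)
  have h3 := keyX (fun s => s.1 = true ∧ s.2 = true)
  have hA := key (fun s t => s.1 ≠ t.1 ∧ s.2 ≠ t.2)
  have hB := key (fun s t => s.1 ≠ t.1)
  have hC := key (fun s t => s.2 ≠ t.2)
  rw [h1] at hp₁
  rw [h2] at hp₂
  rw [h3] at hc
  rw [hA, hB, hC]
  rw [Finset.sum_filter] at hp₁ hp₂ hc ⊢
  rw [Finset.sum_filter, Finset.sum_filter] at *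
  simp only [Fintype.sum_prod_type, Fintype.sum_bool, if_true, if_false,
    reduceIte, ne_eq, Bool.true_eq_false, Bool.false_eq_true, not_false_eq_true,
    not_true_eq_false, and_true, and_false, true_and, false_and,
    if_pos, decide_eq_true_eq] at hp₁ hp₂ hc ⊢
  · generalize hff : q (false, false) = a at *
    generalize hft : q (false, true) = b at *
    generalize htf : q (true, false) = d at *
    generalize htt : q (true, true) = e at *
    subst hp₁ hp₂ hc
    have : a = 1 - b - d - e := by linarith
    subst this
    ring
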